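/- Let X be a compact Hausdorff space and μ₁, μ₂ idempotent probability measures on X whose supports supp μ₁ and supp μ₂ each contain at least two points. Then the set Λ(μ₁, μ₂) of (μ₁, μ₂)-admissible idempotent probability measures on X × X has cardinality at least that of the continuum. -/

import Mathlib

noncomputable section

/-- An idempotent probability measure on a topological space `X`:
a functional `μ : C(X, ℝ) → ℝ` which sends constants to their values,
is `max`-`plus` homogeneous, and turns pointwise maxima into maxima. -/
def IsIPM {X : Type*} [TopologicalSpace X] (μ : C(X, ℝ) → ℝ) : Prop :=
  (∀ c : ℝ, μ (ContinuousMap.const X c) = c) ∧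
  (∀ (c : ℝ) (φ : C(X, ℝ)), μ (ContinuousMap.const X c + φ) = c + μ φ) ∧
  (∀ φ ψ : C(X, ℝ), μ (φ ⊔ ψ) = max (μ φ) (μ ψ))

/-- `ξ` is a `(μ₁, μ₂)`-admissible idempotent probability measure on `X × X`. -/
def IsAdmissible {X : Type*} [TopologicalSpace X]
    (μ₁ μ₂ : C(X, ℝ) → ℝ) (ξ : C(X × X, ℝ) → ℝ) : Prop :=
  IsIPM ξ ∧
  (∀ φ : C(X, ℝ), ξ (φ.comp ⟨Prod.fst, continuous_fst⟩) = μ₁ φ) ∧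
  (∀ φ : C(X, ℝ), ξ (φ.comp ⟨Prod.snd, continuous_snd⟩) = μ₂ φ)

/-- The density of an idempotent probability measure. -/
def idemDensity {Z : Type*} [TopologicalSpace Z] (μ : C(Z, ℝ) → ℝ) (z : Z) : EReal :=
  sInf {r : EReal | ∃ φ : C(Z, ℝ), φ ≤ 0 ∧ φ z = 0 ∧ r = (μ φ : EReal)}

/-- The support of an idempotent probability measure. -/
def idemSupp {Z : Type*} [TopologicalSpace Z] (μ : C(Z, ℝ) → ℝ) : Set Z :=
  {z | ⊥ < idemDensity μ z}

/-- The metric `ρ` of a metric space `X`, as a continuous function on `X × X`. -/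
def rhoFun (X : Type*) [MetricSpace X] : C(X × X, ℝ) :=
  ⟨fun p => dist p.1 p.2, continuous_dist⟩

/-- The Uspenskii-type distance function `d_I` on idempotent probability measures. -/
def dI {X : Type*} [MetricSpace X] (μ₁ μ₂ : C(X, ℝ) → ℝ) : ℝ :=
  sInf {r : ℝ | ∃ ξ : C(X × X, ℝ) → ℝ, IsAdmissible μ₁ μ₂ ξ ∧ r = ξ (rhoFun X)}

/-- The distance function `ρ_I` on idempotent probability measures. -/
def rhoI {X : Type*} [MetricSpace X] (μ₁ μ₂ : C(X, ℝ) → ℝ) : ℝ :=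
  sInf {r : ℝ | ∃ ξ : C(X × X, ℝ) → ℝ, IsAdmissible μ₁ μ₂ ξ ∧
    r = sSup {s : ℝ | ∃ p ∈ idemSupp ξ, s = max (ξ (rhoFun X)) (dist p.1 p.2)}}

section basic
variable {X : Type*} [TopologicalSpace X] {μ : C(X, ℝ) → ℝ} (h : IsIPM μ)

theorem ipm_mono (h : IsIPM μ) {φ ψ : C(X, ℝ)} (hle : φ ≤ ψ) : μ φ ≤ μ ψ := by
  have := h.2.2 φ ψ
  rw [sup_eq_right.mpr hle] at this
  rw [this]; exact le_max_left _ _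

theorem ipm_zero (h : IsIPM μ) : μ 0 = 0 := by
  have : (0 : C(X, ℝ)) = ContinuousMap.const X 0 := by ext x; rfl
  rw [this, h.1]

theorem ipm_le_const (h : IsIPM μ) {φ : C(X, ℝ)} {c : ℝ} (hle : ∀ x, φ x ≤ c) : μ φ ≤ c := by
  have : φ ≤ ContinuousMap.const X c := fun x => hle x
  calc μ φ ≤ μ (ContinuousMap.const X c) := ipm_mono h this
    _ = c := h.1 c

theorem ipm_const_le (h : IsIPM μ) {φ : C(X, ℝ)} {c : ℝ} (hle : ∀ x, c ≤ φ x) : c ≤ μ φ := by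
  have : ContinuousMap.const X c ≤ φ := fun x => hle x
  calc c = μ (ContinuousMap.const X c) := (h.1 c).symm
    _ ≤ μ φ := ipm_mono h this

/-- density is ≤ 0 -/
theorem idemDensity_nonpos (h : IsIPM μ) (x : X) : idemDensity μ x ≤ 0 := by
  have h0 : ((μ 0 : ℝ) : EReal) ∈ {r : EReal | ∃ φ : C(X, ℝ), φ ≤ 0 ∧ φ x = 0 ∧ r = (μ φ : EReal)} :=
    ⟨0, le_refl _, rfl, rfl⟩
  have := sInf_le h0
  rwa [ipm_zero h] at this

/-- key density bound : c ≤ d(x) → c + g x ≤ μ g -/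
theorem ipm_density_bound (h : IsIPM μ) {x : X} {c : ℝ}
    (hc : (c : EReal) ≤ idemDensity μ x) (g : C(X, ℝ)) : c + g x ≤ μ g := by
  set ψ : C(X, ℝ) := (g - ContinuousMap.const X (g x)) ⊓ 0 with hψ
  have hψle : ψ ≤ 0 := inf_le_right
  have hψx : ψ x = 0 := by simp [hψ]
  have hmem : ((μ ψ : ℝ) : EReal) ∈ {r : EReal | ∃ φ : C(X, ℝ), φ ≤ 0 ∧ φ x = 0 ∧ r = (μ φ : EReal)} :=
    ⟨ψ, hψle, hψx, rfl⟩
  have h1 : (c : EReal) ≤ (μ ψ : EReal) := le_trans hc (sInf_le hmem)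
  have h1' : c ≤ μ ψ := by exact_mod_cast h1
  have h2 : μ ψ ≤ μ (g - ContinuousMap.const X (g x)) := ipm_mono h inf_le_left
  have h3 : μ (g - ContinuousMap.const X (g x)) = μ g - g x := by
    have : ContinuousMap.const X (g x) + (g - ContinuousMap.const X (g x)) = g := by ext y; simp
    have h4 := h.2.1 (g x) (g - ContinuousMap.const X (g x))
    rw [this] at h4
    linarith
  linarith [h1', h2, h3.le, h3.ge]

/-- exists φ with μ φ < t when density < t -/
theorem ipm_exists_lt {x : X} {t : ℝ} (hd : idemDensity μ x < (t : EReal)) :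
    ∃ φ : C(X, ℝ), φ ≤ 0 ∧ φ x = 0 ∧ μ φ < t := by
  obtain ⟨r, hr, hrt⟩ := sInf_lt_iff.mp hd
  obtain ⟨φ, hφ1, hφ2, hφ3⟩ := hr
  refine ⟨φ, hφ1, hφ2, ?_⟩
  rw [hφ3] at hrt; exact_mod_cast hrt

end basic

section zeropoint
variable {X : Type*} [TopologicalSpace X] [CompactSpace X] {μ : C(X, ℝ) → ℝ}

theorem ipm_sup' (h : IsIPM μ) {ι : Type*} (T : Finset ι) (hT : T.Nonempty) (f : ι → C(X, ℝ)) :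
    μ (T.sup' hT f) = T.sup' hT (fun i => μ (f i)) := by
  induction hT using Finset.Nonempty.cons_induction with
  | singleton a => simp
  | cons a s ha hs ih => rw [Finset.sup'_cons, Finset.sup'_cons, h.2.2, ih] <;> exact hs

/-- each set {d ≥ -ε} is nonempty -/
theorem ipm_exists_density_ge (h : IsIPM μ) [Nonempty X] {ε : ℝ} (hε : 0 < ε) :
    ∃ x : X, ((-ε : ℝ) : EReal) ≤ idemDensity μ x := by
  by_contra hcon
  push_neg at hcon
  have hsel : ∀ x : X, ∃ φ : C(X, ℝ), φ ≤ 0 ∧ φ x = 0 ∧ μ φ < -ε := fun x => ipm_exists_lt (hcon x)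
  choose φ hφ0 hφx hφμ using hsel
  have hcov : (Set.univ : Set X) ⊆ ⋃ x : X, (φ x) ⁻¹' Set.Ioi (-ε) := by
    intro y _
    exact Set.mem_iUnion.mpr ⟨y, by simp [hφx y, hε]⟩
  obtain ⟨T, hT⟩ := isCompact_univ.elim_finite_subcover
    (fun x : X => (φ x) ⁻¹' Set.Ioi (-ε)) (fun x => (φ x).continuous.isOpen_preimage _ isOpen_Ioi) hcov
  have hTne : T.Nonempty := by
    rcases Set.mem_iUnion.mp (hT (Set.mem_univ (Classical.arbitrary X))) with ⟨i, hi⟩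
    rcases Set.mem_iUnion.mp hi with ⟨hiT, _⟩
    exact ⟨i, hiT⟩
  have hμg : μ (T.sup' hTne φ) = T.sup' hTne (fun x => μ (φ x)) := ipm_sup' h T hTne φ
  have hlt : μ (T.sup' hTne φ) < -ε := by
    rw [hμg]
    exact Finset.sup'_lt_iff hTne |>.mpr fun x _ => hφμ x
  have hge : -ε ≤ μ (T.sup' hTne φ) := by
    apply ipm_const_le h
    intro y
    rcases Set.mem_iUnion.mp (hT (Set.mem_univ y)) with ⟨i, hi⟩
    rcases Set.mem_iUnion.mp hi with ⟨hiT, hiy⟩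
    have h1 : (-ε : ℝ) < φ i y := hiy
    have h2 : φ i y ≤ (T.sup' hTne φ) y := ContinuousMap.le_def.mp (Finset.le_sup' φ hiT) y
    linarith
  linarith

omit [CompactSpace X] in
/-- the set {d < t} is open -/
theorem ipm_density_lt_open (h : IsIPM μ) (t : ℝ) :
    IsOpen {x : X | idemDensity μ x < (t : EReal)} := by
  rw [isOpen_iff_forall_mem_open]
  intro x hx
  obtain ⟨φ, hφ0, hφx, hφμ⟩ := ipm_exists_lt hx
  refine ⟨φ ⁻¹' Set.Ioi (μ φ - t), ?_, φ.continuous.isOpen_preimage _ isOpen_Ioi, ?_⟩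
  · intro y hy
    have hy' : μ φ - t < φ y := hy
    set ψ : C(X, ℝ) := (φ - ContinuousMap.const X (φ y)) ⊓ 0 with hψdef
    have hψle : ψ ≤ 0 := inf_le_right
    have hψy : ψ y = 0 := by simp [hψdef]
    have hμψ : μ ψ ≤ μ φ - φ y := by
      have h2 : μ ψ ≤ μ (φ - ContinuousMap.const X (φ y)) := ipm_mono h inf_le_left
      have h3 : μ (φ - ContinuousMap.const X (φ y)) = μ φ - φ y := by
        have heq : ContinuousMap.const X (φ y) + (φ - ContinuousMap.const X (φ y)) = φ := by ext z; simp
        have h4 := h.2.1 (φ y) (φ - ContinuousMap.const X (φ y))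
        rw [heq] at h4; linarith
      linarith
    have hψt : μ ψ < t := by linarith
    have hmem : ((μ ψ : ℝ) : EReal) ∈ {r : EReal | ∃ φ' : C(X, ℝ), φ' ≤ 0 ∧ φ' y = 0 ∧ r = (μ φ' : EReal)} :=
      ⟨ψ, hψle, hψy, rfl⟩
    exact lt_of_le_of_lt (sInf_le hmem) (by exact_mod_cast hψt)
  · simp only [Set.mem_preimage, Set.mem_Ioi, hφx]
    linarith

/-- Lemma Z: there is a point with density exactly 0. -/
theorem ipm_exists_density_zero (h : IsIPM μ) [Nonempty X] :
    ∃ x : X, idemDensity μ x = 0 := by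
  set C : ℕ → Set X := fun n => {x : X | ((-(1 / ((n : ℝ) + 1)) : ℝ) : EReal) ≤ idemDensity μ x} with hC
  have hCcl : ∀ n, IsClosed (C n) := by
    intro n
    have heq : C n = {x : X | idemDensity μ x < ((-(1 / ((n : ℝ) + 1)) : ℝ) : EReal)}ᶜ := by
      ext x; simp [hC, not_lt]
    rw [heq]
    exact (ipm_density_lt_open h _).isClosed_compl
  have hCne : ∀ n, (C n).Nonempty := by
    intro n
    have hpos : (0 : ℝ) < 1 / ((n : ℝ) + 1) := by positivity
    obtain ⟨x, hx⟩ := ipm_exists_density_ge h hpos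
    exact ⟨x, hx⟩
  have hCmono : ∀ n, C (n + 1) ⊆ C n := by
    intro n x hx
    simp only [hC, Set.mem_setOf_eq] at hx ⊢
    refine le_trans (EReal.coe_le_coe_iff.mpr ?_) hx
    have h1 : (0:ℝ) < (n : ℝ) + 1 := by positivity
    have h2 : (n : ℝ) + 1 ≤ ((n : ℝ) + 1) + 1 := by linarith
    have h3 := one_div_le_one_div_of_le h1 h2
    push_cast
    linarith
  obtain ⟨x, hx⟩ := IsCompact.nonempty_iInter_of_sequence_nonempty_isCompact_isClosed
    C hCmono hCne (isClosed_univ.isCompact.of_isClosed_subset (hCcl 0) (Set.subset_univ _)) hCcl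
  refine ⟨x, le_antisymm (idemDensity_nonpos h x) ?_⟩
  by_contra hlt
  push_neg at hlt
  rcases eq_or_lt_of_le (bot_le : ⊥ ≤ idemDensity μ x) with h'' | h''
  · have hx0 : x ∈ C 0 := Set.mem_iInter.mp hx 0
    simp only [hC, Set.mem_setOf_eq, ← h''] at hx0
    exact EReal.coe_ne_bot _ (le_bot_iff.mp hx0)
  · set d := idemDensity μ x with hd
    have hdne : d ≠ ⊥ := h''.ne'
    have hdnt : d ≠ ⊤ := (lt_of_le_of_lt (idemDensity_nonpos h x) (by norm_num)).ne
    set r := d.toReal with hr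
    have hdr : (r : EReal) = d := EReal.coe_toReal hdnt hdne
    have hrneg : r < 0 := by
      have hlt' : d < 0 := hlt
      rw [← hdr] at hlt'
      exact_mod_cast hlt'
    obtain ⟨n, hn⟩ := exists_nat_one_div_lt (neg_pos.mpr hrneg)
    have hxn : x ∈ C n := Set.mem_iInter.mp hx n
    simp only [hC, Set.mem_setOf_eq] at hxn
    rw [← hd, ← hdr] at hxn
    have hxn' : (-(1 / ((n : ℝ) + 1))) ≤ r := by exact_mod_cast hxn
    linarith
end zeropoint

section tensor
variable {X : Type*} [TopologicalSpace X] [CompactSpace X]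

variable {μ : C(X, ℝ) → ℝ}

theorem ipm_lipschitz (h : IsIPM μ) : LipschitzWith 1 μ := by
  have key : ∀ φ ψ : C(X, ℝ), μ φ ≤ μ ψ + dist φ ψ := by
    intro φ ψ
    have hle : φ ≤ ContinuousMap.const X (dist φ ψ) + ψ := by
      intro x
      have := ContinuousMap.dist_apply_le_dist (f := φ) (g := ψ) x
      have h2 := abs_le.mp (show |φ x - ψ x| ≤ dist φ ψ by rwa [Real.dist_eq] at this)
      show φ x ≤ ContinuousMap.const X (dist φ ψ) x + ψ x
      simp only [ContinuousMap.const_apply]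
      linarith [h2.2]
    calc μ φ ≤ μ (ContinuousMap.const X (dist φ ψ) + ψ) := ipm_mono h hle
      _ = dist φ ψ + μ ψ := h.2.1 _ _
      _ = μ ψ + dist φ ψ := by ring
  apply LipschitzWith.of_dist_le_mul
  intro φ ψ
  rw [NNReal.coe_one, one_mul, Real.dist_eq, abs_le]
  constructor
  · linarith [key ψ φ, dist_comm φ ψ]
  · linarith [key φ ψ]

/-- the continuous map x ↦ μ₂ (Φ(x,·)) -/
def fiberMap (μ₂ : C(X, ℝ) → ℝ) (h₂ : IsIPM μ₂) (Φ : C(X × X, ℝ)) : C(X, ℝ) :=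
  ⟨fun x => μ₂ (Φ.curry x), ((ipm_lipschitz h₂).continuous).comp Φ.curry.continuous⟩

@[simp] theorem fiberMap_apply (μ₂ : C(X, ℝ) → ℝ) (h₂ : IsIPM μ₂) (Φ : C(X × X, ℝ)) (x : X) :
    fiberMap μ₂ h₂ Φ x = μ₂ (Φ.curry x) := rfl

/-- product coupling -/
def tensorIPM (μ₁ μ₂ : C(X, ℝ) → ℝ) (h₂ : IsIPM μ₂) : C(X × X, ℝ) → ℝ :=
  fun Φ => μ₁ (fiberMap μ₂ h₂ Φ)

theorem curry_const (c : ℝ) (x : X) :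
    (ContinuousMap.const (X × X) c).curry x = ContinuousMap.const X c := by ext y; rfl

theorem curry_add_const (c : ℝ) (Φ : C(X × X, ℝ)) (x : X) :
    (ContinuousMap.const (X × X) c + Φ).curry x = ContinuousMap.const X c + Φ.curry x := by ext y; rfl

theorem curry_sup (Φ Ψ : C(X × X, ℝ)) (x : X) :
    (Φ ⊔ Ψ).curry x = Φ.curry x ⊔ Ψ.curry x := by ext y; rfl

theorem curry_comp_fst (φ : C(X, ℝ)) (x : X) :
    (φ.comp ⟨Prod.fst, continuous_fst⟩ : C(X × X, ℝ)).curry x = ContinuousMap.const X (φ x) := by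
  ext y; rfl

theorem curry_comp_snd (φ : C(X, ℝ)) (x : X) :
    (φ.comp ⟨Prod.snd, continuous_snd⟩ : C(X × X, ℝ)).curry x = φ := by ext y; rfl

theorem tensor_admissible (μ₁ μ₂ : C(X, ℝ) → ℝ) (h₁ : IsIPM μ₁) (h₂ : IsIPM μ₂) :
    IsAdmissible μ₁ μ₂ (tensorIPM μ₁ μ₂ h₂) := by
  refine ⟨⟨?_, ?_, ?_⟩, ?_, ?_⟩
  · intro c
    have : fiberMap μ₂ h₂ (ContinuousMap.const (X × X) c) = ContinuousMap.const X c := by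
      ext x; simp [curry_const, h₂.1]
    rw [tensorIPM, this, h₁.1]
  · intro c Φ
    have : fiberMap μ₂ h₂ (ContinuousMap.const (X × X) c + Φ) =
        ContinuousMap.const X c + fiberMap μ₂ h₂ Φ := by
      ext x; simp [curry_add_const, curry_const, h₂.2.1]
    rw [tensorIPM, this, h₁.2.1]; rfl
  · intro Φ Ψ
    have : fiberMap μ₂ h₂ (Φ ⊔ Ψ) = fiberMap μ₂ h₂ Φ ⊔ fiberMap μ₂ h₂ Ψ := by
      ext x
      simp only [fiberMap_apply, curry_sup, h₂.2.2, ContinuousMap.sup_apply]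
    rw [tensorIPM, this, h₁.2.2]; rfl
  · intro φ
    have : fiberMap μ₂ h₂ (φ.comp ⟨Prod.fst, continuous_fst⟩) = φ := by
      ext x; simp [curry_comp_fst, h₂.1]
    rw [tensorIPM, this]
  · intro φ
    have : fiberMap μ₂ h₂ (φ.comp ⟨Prod.snd, continuous_snd⟩) = ContinuousMap.const X (μ₂ φ) := by
      ext x; simp [curry_comp_snd]
    rw [tensorIPM, this, h₁.1]
end tensor

section twosep
variable {X : Type*} [TopologicalSpace X] [CompactSpace X]

def TwoSep (μ₁ μ₂ : C(X, ℝ) → ℝ) : Prop :=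
  ∃ (ξ₁ ξ₂ : C(X × X, ℝ) → ℝ) (Φ : C(X × X, ℝ)),
    IsAdmissible μ₁ μ₂ ξ₁ ∧ IsAdmissible μ₁ μ₂ ξ₂ ∧ ξ₂ Φ < ξ₁ Φ

/-- tensor of a product-type function -/
theorem tensor_prodfun (μ₁ μ₂ : C(X, ℝ) → ℝ) (h₁ : IsIPM μ₁) (h₂ : IsIPM μ₂) (φ ψ : C(X, ℝ)) :
    tensorIPM μ₁ μ₂ h₂ (φ.comp ⟨Prod.fst, continuous_fst⟩ + ψ.comp ⟨Prod.snd, continuous_snd⟩)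
      = μ₁ φ + μ₂ ψ := by
  have hcur : ∀ x : X, ((φ.comp ⟨Prod.fst, continuous_fst⟩ +
      ψ.comp ⟨Prod.snd, continuous_snd⟩ : C(X × X, ℝ))).curry x
      = ContinuousMap.const X (φ x) + ψ := by
    intro x; ext y; rfl
  have : fiberMap μ₂ h₂ (φ.comp ⟨Prod.fst, continuous_fst⟩ + ψ.comp ⟨Prod.snd, continuous_snd⟩)
      = ContinuousMap.const X (μ₂ ψ) + φ := by
    ext x
    simp only [fiberMap_apply, hcur, h₂.2.1]
    simp [add_comm]
  rw [tensorIPM, this, h₁.2.1]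
  ring

theorem max_plus_distrib (a b c p q : ℝ) :
    max (max a b) (c + max p q) = max (max a (c + p)) (max b (c + q)) := by
  rw [← max_add_add_left, max_max_max_comm]

theorem max_plus_shift (s c₀ c t : ℝ) :
    max (c₀ + s) (c + (c₀ + t)) = c₀ + max s (c + t) := by
  rw [show c + (c₀ + t) = c₀ + (c + t) by ring, max_add_add_left]

/-- Case A : both measures have a support point with negative density. -/
theorem caseA {μ₁ μ₂ : C(X, ℝ) → ℝ} (h₁ : IsIPM μ₁) (h₂ : IsIPM μ₂)
    {x₁ y₁ : X} (hx₁ : ⊥ < idemDensity μ₁ x₁) (hx₁n : idemDensity μ₁ x₁ < 0)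
    (hy₁ : ⊥ < idemDensity μ₂ y₁) (hy₁n : idemDensity μ₂ y₁ < 0) :
    TwoSep μ₁ μ₂ := by
  have hd₁t : idemDensity μ₁ x₁ ≠ ⊤ := (lt_of_le_of_lt (idemDensity_nonpos h₁ x₁) (by norm_num)).ne
  have hd₂t : idemDensity μ₂ y₁ ≠ ⊤ := (lt_of_le_of_lt (idemDensity_nonpos h₂ y₁) (by norm_num)).ne
  set r₁ := (idemDensity μ₁ x₁).toReal with hr₁
  set r₂ := (idemDensity μ₂ y₁).toReal with hr₂
  have hc₁ : (r₁ : EReal) = idemDensity μ₁ x₁ := EReal.coe_toReal hd₁t hx₁.ne'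
  have hc₂ : (r₂ : EReal) = idemDensity μ₂ y₁ := EReal.coe_toReal hd₂t hy₁.ne'
  have hr₁n : r₁ < 0 := by rw [← hc₁] at hx₁n; exact_mod_cast hx₁n
  have hr₂n : r₂ < 0 := by rw [← hc₂] at hy₁n; exact_mod_cast hy₁n
  set c := min r₁ r₂ with hc
  have hcle : c ≤ 0 := le_trans (min_le_left _ _) hr₁n.le
  have hTadm := tensor_admissible μ₁ μ₂ h₁ h₂
  set ξ : C(X × X, ℝ) → ℝ := fun Φ => max (tensorIPM μ₁ μ₂ h₂ Φ) (c + Φ (x₁, y₁)) with hξ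
  have hbound₁ : ∀ g : C(X, ℝ), c + g x₁ ≤ μ₁ g := fun g =>
    ipm_density_bound h₁ (by rw [← hc₁]; exact_mod_cast min_le_left r₁ r₂) g
  have hbound₂ : ∀ g : C(X, ℝ), c + g y₁ ≤ μ₂ g := fun g =>
    ipm_density_bound h₂ (by rw [← hc₂]; exact_mod_cast min_le_right r₁ r₂) g
  have hξadm : IsAdmissible μ₁ μ₂ ξ := by
    refine ⟨⟨?_, ?_, ?_⟩, ?_, ?_⟩
    · intro c₀
      show max (tensorIPM μ₁ μ₂ h₂ (ContinuousMap.const (X × X) c₀))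
        (c + (ContinuousMap.const (X × X) c₀) (x₁, y₁)) = c₀
      rw [hTadm.1.1 c₀, ContinuousMap.const_apply]
      exact max_eq_left (by linarith)
    · intro c₀ Φ
      show max (tensorIPM μ₁ μ₂ h₂ (ContinuousMap.const (X × X) c₀ + Φ))
        (c + (ContinuousMap.const (X × X) c₀ + Φ) (x₁, y₁)) = c₀ + ξ Φ
      rw [hTadm.1.2.1 c₀ Φ, ContinuousMap.add_apply, ContinuousMap.const_apply]
      exact max_plus_shift _ _ _ _
    · intro Φ Ψ
      show max (tensorIPM μ₁ μ₂ h₂ (Φ ⊔ Ψ)) (c + (Φ ⊔ Ψ) (x₁, y₁)) = max (ξ Φ) (ξ Ψ)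
      rw [hTadm.1.2.2 Φ Ψ, ContinuousMap.sup_apply]
      exact max_plus_distrib _ _ _ _ _
    · intro φ
      show max (tensorIPM μ₁ μ₂ h₂ (φ.comp ⟨Prod.fst, continuous_fst⟩))
        (c + (φ.comp ⟨Prod.fst, continuous_fst⟩) (x₁, y₁)) = μ₁ φ
      rw [hTadm.2.1 φ]
      exact max_eq_left (hbound₁ φ)
    · intro φ
      show max (tensorIPM μ₁ μ₂ h₂ (φ.comp ⟨Prod.snd, continuous_snd⟩))
        (c + (φ.comp ⟨Prod.snd, continuous_snd⟩) (x₁, y₁)) = μ₂ φ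
      rw [hTadm.2.2 φ]
      exact max_eq_left (hbound₂ φ)
  -- separation
  set ε := -(max r₁ r₂) / 2 with hε
  have hεpos : 0 < ε := by
    have : max r₁ r₂ < 0 := max_lt hr₁n hr₂n
    simp only [hε]; linarith
  obtain ⟨φ, hφ0, hφx, hφμ⟩ := ipm_exists_lt (μ := μ₁) (x := x₁) (t := r₁ + ε)
    (by rw [← hc₁]; exact_mod_cast (by linarith : r₁ < r₁ + ε))
  obtain ⟨ψ, hψ0, hψy, hψμ⟩ := ipm_exists_lt (μ := μ₂) (x := y₁) (t := r₂ + ε)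
    (by rw [← hc₂]; exact_mod_cast (by linarith : r₂ < r₂ + ε))
  set Φ₀ : C(X × X, ℝ) := φ.comp ⟨Prod.fst, continuous_fst⟩ + ψ.comp ⟨Prod.snd, continuous_snd⟩
    with hΦ₀
  have hTΦ₀ : tensorIPM μ₁ μ₂ h₂ Φ₀ = μ₁ φ + μ₂ ψ := tensor_prodfun μ₁ μ₂ h₁ h₂ φ ψ
  have hΦ₀p : Φ₀ (x₁, y₁) = 0 := by
    show φ x₁ + ψ y₁ = 0
    rw [hφx, hψy]; ring
  have hsum : μ₁ φ + μ₂ ψ < c := by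
    have hkey : r₁ + ε + (r₂ + ε) = min r₁ r₂ := by
      rcases le_total r₁ r₂ with h' | h'
      · rw [min_eq_left h']; rw [hε, max_eq_right h']; ring
      · rw [min_eq_right h']; rw [hε, max_eq_left h']; ring
    calc μ₁ φ + μ₂ ψ < (r₁ + ε) + (r₂ + ε) := by linarith
      _ = c := by rw [hkey]
  refine ⟨ξ, tensorIPM μ₁ μ₂ h₂, Φ₀, hξadm, hTadm, ?_⟩
  have hξΦ₀ : ξ Φ₀ = max (tensorIPM μ₁ μ₂ h₂ Φ₀) c := by
    show max _ (c + Φ₀ (x₁, y₁)) = _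
    rw [hΦ₀p, add_zero]
  rw [hξΦ₀, hTΦ₀]
  exact lt_of_lt_of_le hsum (le_max_right _ _)
end twosep

section caseB
variable {X : Type*} [TopologicalSpace X] [CompactSpace X] [T2Space X]

/-- Case B : μ₂ has two support points with zero density. -/
theorem caseB {μ₁ μ₂ : C(X, ℝ) → ℝ} (h₁ : IsIPM μ₁) (h₂ : IsIPM μ₂)
    {b b' : X} (hbb' : b ≠ b') (hb : idemDensity μ₂ b = 0) (hb' : idemDensity μ₂ b' = 0)
    {a₁ x₀ : X} (ha₁ : ⊥ < idemDensity μ₁ a₁) (hx₀ : idemDensity μ₁ x₀ = 0) (hax : a₁ ≠ x₀) :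
    TwoSep μ₁ μ₂ := by
  have hd₁t : idemDensity μ₁ a₁ ≠ ⊤ := (lt_of_le_of_lt (idemDensity_nonpos h₁ a₁) (by norm_num)).ne
  set r := (idemDensity μ₁ a₁).toReal with hr
  have hcr : (r : EReal) = idemDensity μ₁ a₁ := EReal.coe_toReal hd₁t ha₁.ne'
  have hrle : r ≤ 0 := by
    have := idemDensity_nonpos h₁ a₁
    rw [← hcr] at this; exact_mod_cast this
  set K : ℝ := 1 - r with hK
  have hKpos : 0 < K := by simp only [hK]; linarith
  -- Urysohn functions
  obtain ⟨u, hu0, hu1, hubd⟩ := exists_continuous_zero_one_of_isClosed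
    (isClosed_singleton (x := x₀)) (isClosed_singleton (x := a₁))
    (by simp [Set.disjoint_singleton, Ne.symm hax])
  obtain ⟨v, hv0, hv1, hvbd⟩ := exists_continuous_zero_one_of_isClosed
    (isClosed_singleton (x := b')) (isClosed_singleton (x := b))
    (by simp [Set.disjoint_singleton, Ne.symm hbb'])
  have hux₀ : u x₀ = 0 := hu0 rfl
  have hua₁ : u a₁ = 1 := hu1 rfl
  have hvb' : v b' = 0 := hv0 rfl
  have hvb : v b = 1 := hv1 rfl
  -- density bounds at b, b', x₀
  have hbd_b : ∀ g : C(X, ℝ), g b ≤ μ₂ g := by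
    intro g
    have := ipm_density_bound h₂ (x := b) (c := 0) (by rw [hb]; rfl) g
    simpa using this
  have hbd_b' : ∀ g : C(X, ℝ), g b' ≤ μ₂ g := by
    intro g
    have := ipm_density_bound h₂ (x := b') (c := 0) (by rw [hb']; rfl) g
    simpa using this
  have hbd_x₀ : ∀ g : C(X, ℝ), g x₀ ≤ μ₁ g := by
    intro g
    have := ipm_density_bound h₁ (x := x₀) (c := 0) (by rw [hx₀]; rfl) g
    simpa using this
  have hbd_a₁ : ∀ g : C(X, ℝ), r + g a₁ ≤ μ₁ g := fun g =>
    ipm_density_bound h₁ (by rw [hcr]) g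
  -- μ₁ of -K•u is zero
  have hKu : μ₁ (ContinuousMap.const X 0 + (-K) • u) = 0 := by
    apply le_antisymm
    · apply ipm_le_const h₁
      intro x
      have := (hubd x).1
      simp only [ContinuousMap.add_apply, ContinuousMap.const_apply, ContinuousMap.smul_apply,
        smul_eq_mul]
      nlinarith [hKpos]
    · have := hbd_x₀ (ContinuousMap.const X 0 + (-K) • u)
      simpa [hux₀] using this
  have hTadm := tensor_admissible μ₁ μ₂ h₁ h₂
  -- the inner function of the modified coupling
  have hinner_cont : ∀ Φ : C(X × X, ℝ), Continuous fun x =>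
      max (Φ (x, b)) (-K * u x + μ₂ (Φ.curry x)) := by
    intro Φ
    exact (Φ.continuous.comp (continuous_id.prodMk continuous_const)).max
      (((continuous_const.mul u.continuous)).add
        ((ipm_lipschitz h₂).continuous.comp Φ.curry.continuous))
  set inner : C(X × X, ℝ) → C(X, ℝ) := fun Φ => ⟨_, hinner_cont Φ⟩ with hinner
  set ξ : C(X × X, ℝ) → ℝ := fun Φ => μ₁ (inner Φ) with hξ
  have hinner_apply : ∀ (Φ : C(X × X, ℝ)) (x : X),
      inner Φ x = max (Φ (x, b)) (-K * u x + μ₂ (Φ.curry x)) := fun Φ x => rfl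
  have hξadm : IsAdmissible μ₁ μ₂ ξ := by
    refine ⟨⟨?_, ?_, ?_⟩, ?_, ?_⟩
    · intro c₀
      have : inner (ContinuousMap.const (X × X) c₀) = ContinuousMap.const X c₀ := by
        ext x
        rw [hinner_apply, curry_const, h₂.1]
        show max c₀ (-K * u x + c₀) = c₀
        exact max_eq_left (by nlinarith [mul_nonneg hKpos.le (hubd x).1])
      rw [hξ]; show μ₁ _ = c₀
      rw [this, h₁.1]
    · intro c₀ Φ
      have : inner (ContinuousMap.const (X × X) c₀ + Φ) =
          ContinuousMap.const X c₀ + inner Φ := by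
        ext x
        rw [ContinuousMap.add_apply, ContinuousMap.const_apply, hinner_apply, hinner_apply,
          curry_add_const, h₂.2.1]
        show max (c₀ + Φ (x, b)) (-K * u x + (c₀ + μ₂ (Φ.curry x))) = _
        rw [max_plus_shift]
      show μ₁ _ = c₀ + μ₁ _
      rw [this, h₁.2.1]
    · intro Φ Ψ
      have : inner (Φ ⊔ Ψ) = inner Φ ⊔ inner Ψ := by
        ext x
        rw [ContinuousMap.sup_apply, hinner_apply, hinner_apply, hinner_apply, curry_sup, h₂.2.2]
        show max (max (Φ (x,b)) (Ψ (x,b))) (-K * u x + max (μ₂ (Φ.curry x)) (μ₂ (Ψ.curry x))) = _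
        rw [max_plus_distrib]
      show μ₁ _ = max (μ₁ _) (μ₁ _)
      rw [this, h₁.2.2]
    · intro φ
      have : inner (φ.comp ⟨Prod.fst, continuous_fst⟩) = φ := by
        ext x
        rw [hinner_apply, curry_comp_fst, h₂.1]
        show max (φ x) (-K * u x + φ x) = φ x
        exact max_eq_left (by nlinarith [mul_nonneg hKpos.le (hubd x).1])
      show μ₁ _ = μ₁ φ
      rw [this]
    · intro φ
      have : inner (φ.comp ⟨Prod.snd, continuous_snd⟩) =
          ContinuousMap.const X (φ b) ⊔ (ContinuousMap.const X (μ₂ φ) + (-K) • u) := by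
        ext x
        rw [hinner_apply, curry_comp_snd]
        show max (φ b) (-K * u x + μ₂ φ) = _
        simp only [ContinuousMap.sup_apply, ContinuousMap.add_apply, ContinuousMap.const_apply,
          ContinuousMap.smul_apply, smul_eq_mul]
        ring_nf
      show μ₁ _ = μ₂ φ
      rw [this, h₁.2.2]
      have h5 : μ₁ (ContinuousMap.const X (μ₂ φ) + (-K) • u) = μ₂ φ := by
        have h6 := h₁.2.1 (μ₂ φ) (ContinuousMap.const X 0 + (-K) • u)
        have h7 : ContinuousMap.const X (μ₂ φ) + (-K) • u =
            ContinuousMap.const X (μ₂ φ) + (ContinuousMap.const X 0 + (-K) • u) := by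
          ext x; simp
        rw [h7, h6, hKu, add_zero]
      rw [h5, h₁.1]
      exact max_eq_right (hbd_b φ)
  -- separation
  set φ : C(X, ℝ) := ContinuousMap.const X (-K) + K • u with hφ
  set ψ : C(X, ℝ) := (-K) • v with hψ
  have hψ0 : ψ ≤ 0 := by
    intro y
    show -K * v y ≤ 0
    nlinarith [(hvbd y).1]
  have hμψ : μ₂ ψ = 0 := by
    apply le_antisymm
    · exact ipm_le_const h₂ (fun y => by show -K * v y ≤ 0; nlinarith [(hvbd y).1])
    · have := hbd_b' ψ
      show (0:ℝ) ≤ μ₂ ψ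
      have hψb' : ψ b' = 0 := by show -K * v b' = 0; rw [hvb']; ring
      rwa [hψb'] at this
  set Φ₀ : C(X × X, ℝ) := φ.comp ⟨Prod.fst, continuous_fst⟩ + ψ.comp ⟨Prod.snd, continuous_snd⟩
    with hΦ₀
  have hTΦ₀ : tensorIPM μ₁ μ₂ h₂ Φ₀ = μ₁ φ := by
    rw [tensor_prodfun μ₁ μ₂ h₁ h₂ φ ψ, hμψ, add_zero]
  have hμφ : r ≤ μ₁ φ := by
    have := hbd_a₁ φ
    have hφa₁ : φ a₁ = 0 := by
      show -K + K * u a₁ = 0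
      rw [hua₁]; ring
    rwa [hφa₁, add_zero] at this
  have hξΦ₀ : ξ Φ₀ = -K := by
    have hinnerΦ₀ : inner Φ₀ = ContinuousMap.const X (-K) := by
      ext x
      rw [hinner_apply]
      have hcur : Φ₀.curry x = ContinuousMap.const X (φ x) + ψ := by ext y; rfl
      rw [hcur, h₂.2.1, hμψ, add_zero]
      have h8 : Φ₀ (x, b) = φ x + ψ b := rfl
      have h9 : ψ b = -K := by show -K * v b = -K; rw [hvb]; ring
      have h10 : φ x = K * u x - K := by show -K + K * u x = _; ring
      rw [h8, h9, h10, ContinuousMap.const_apply]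
      rw [show -K * u x + (K * u x - K) = -K by ring]
      exact max_eq_right (by nlinarith [mul_le_of_le_one_right hKpos.le (hubd x).2])
    rw [hξ]; show μ₁ _ = -K
    rw [hinnerΦ₀, h₁.1]
  refine ⟨tensorIPM μ₁ μ₂ h₂, ξ, Φ₀, hTadm, hξadm, ?_⟩
  rw [hξΦ₀, hTΦ₀]
  calc -K = r - 1 := by rw [hK]; ring
    _ < r := by linarith
    _ ≤ μ₁ φ := hμφ
end caseB

section assemble
variable {X : Type*} [TopologicalSpace X] [CompactSpace X] [T2Space X]

/-- transporting couplings through the coordinate swap -/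
theorem twoSep_symm {μ₁ μ₂ : C(X, ℝ) → ℝ} (h : TwoSep μ₂ μ₁) : TwoSep μ₁ μ₂ := by
  obtain ⟨ξ₁, ξ₂, Φ, hξ₁, hξ₂, hlt⟩ := h
  set s : C(X × X, ℝ) → C(X × X, ℝ) := fun Ψ => Ψ.comp ⟨Prod.swap, continuous_swap⟩ with hs
  have hss : ∀ Ψ : C(X × X, ℝ), s (s Ψ) = Ψ := by intro Ψ; ext p; rfl
  have transport : ∀ ξ : C(X × X, ℝ) → ℝ, IsAdmissible μ₂ μ₁ ξ →
      IsAdmissible μ₁ μ₂ (fun Ψ => ξ (s Ψ)) := by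
    intro ξ hξ
    refine ⟨⟨?_, ?_, ?_⟩, ?_, ?_⟩
    · intro c
      have : s (ContinuousMap.const (X × X) c) = ContinuousMap.const (X × X) c := by ext p; rfl
      show ξ _ = c
      rw [this, hξ.1.1]
    · intro c Ψ
      have : s (ContinuousMap.const (X × X) c + Ψ) = ContinuousMap.const (X × X) c + s Ψ := by
        ext p; rfl
      show ξ _ = c + ξ (s Ψ)
      rw [this, hξ.1.2.1]
    · intro Ψ Ψ'
      have : s (Ψ ⊔ Ψ') = s Ψ ⊔ s Ψ' := by ext p; rfl
      show ξ _ = max (ξ (s Ψ)) (ξ (s Ψ'))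
      rw [this, hξ.1.2.2]
    · intro φ
      have : s (φ.comp ⟨Prod.fst, continuous_fst⟩) = φ.comp ⟨Prod.snd, continuous_snd⟩ := by
        ext p; rfl
      show ξ _ = μ₁ φ
      rw [this, hξ.2.2]
    · intro φ
      have : s (φ.comp ⟨Prod.snd, continuous_snd⟩) = φ.comp ⟨Prod.fst, continuous_fst⟩ := by
        ext p; rfl
      show ξ _ = μ₂ φ
      rw [this, hξ.2.1]
  refine ⟨fun Ψ => ξ₁ (s Ψ), fun Ψ => ξ₂ (s Ψ), s Φ, transport ξ₁ hξ₁, transport ξ₂ hξ₂, ?_⟩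
  show ξ₂ (s (s Φ)) < ξ₁ (s (s Φ))
  rw [hss]; exact hlt

/-- main separation theorem -/
theorem twoSep_main {μ₁ μ₂ : C(X, ℝ) → ℝ} (h₁ : IsIPM μ₁) (h₂ : IsIPM μ₂)
    (hs₁ : (idemSupp μ₁).Nontrivial) (hs₂ : (idemSupp μ₂).Nontrivial) :
    TwoSep μ₁ μ₂ := by
  obtain ⟨a, ha, a', ha', haa'⟩ := hs₁
  obtain ⟨b, hb, b', hb', hbb'⟩ := hs₂
  have : Nonempty X := ⟨a⟩
  by_cases hA : (∃ x, ⊥ < idemDensity μ₁ x ∧ idemDensity μ₁ x < 0) ∧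
      (∃ y, ⊥ < idemDensity μ₂ y ∧ idemDensity μ₂ y < 0)
  · obtain ⟨⟨x₁, hx₁, hx₁n⟩, ⟨y₁, hy₁, hy₁n⟩⟩ := hA
    exact caseA h₁ h₂ hx₁ hx₁n hy₁ hy₁n
  · rw [not_and_or] at hA
    rcases hA with hA | hA
    · -- all densities of μ₁ on its support are 0
      push_neg at hA
      have hzero : ∀ x : X, ⊥ < idemDensity μ₁ x → idemDensity μ₁ x = 0 := by
        intro x hx
        exact le_antisymm (idemDensity_nonpos h₁ x) (hA x hx)
      -- use caseB with roles swapped : μ₂ plays first role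
      apply twoSep_symm
      obtain ⟨y₀, hy₀⟩ := ipm_exists_density_zero h₂
      rcases eq_or_ne b y₀ with hby | hby
      · exact caseB h₂ h₁ haa' (hzero a ha) (hzero a' ha') hb' hy₀ (by rw [← hby]; exact hbb'.symm)
      · exact caseB h₂ h₁ haa' (hzero a ha) (hzero a' ha') hb hy₀ hby
    · -- all densities of μ₂ on its support are 0
      push_neg at hA
      have hzero : ∀ y : X, ⊥ < idemDensity μ₂ y → idemDensity μ₂ y = 0 := by
        intro y hy
        exact le_antisymm (idemDensity_nonpos h₂ y) (hA y hy)
      obtain ⟨x₀, hx₀⟩ := ipm_exists_density_zero h₁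
      rcases eq_or_ne a x₀ with hax | hax
      · exact caseB h₁ h₂ hbb' (hzero b hb) (hzero b' hb') ha' hx₀ (by rw [← hax]; exact haa'.symm)
      · exact caseB h₁ h₂ hbb' (hzero b hb) (hzero b' hb') ha hx₀ hax
end assemble

section conclusion
variable {X : Type*} [TopologicalSpace X] [CompactSpace X]

theorem continuum_le_of_twoSep {μ₁ μ₂ : C(X, ℝ) → ℝ} (h : TwoSep μ₁ μ₂) :
    Cardinal.continuum ≤ Cardinal.mk {ξ : C(X × X, ℝ) → ℝ // IsAdmissible μ₁ μ₂ ξ} := by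
  obtain ⟨ξ₁, ξ₂, Φ₀, hξ₁, hξ₂, hlt⟩ := h
  set a : ℝ := ξ₂ Φ₀ - ξ₁ Φ₀ with ha
  have haneg : a < 0 := by simp only [ha]; linarith
  have hfam : ∀ t : ℝ, t ∈ Set.Icc a 0 →
      IsAdmissible μ₁ μ₂ (fun Φ => max (t + ξ₁ Φ) (ξ₂ Φ)) := by
    intro t ht
    refine ⟨⟨?_, ?_, ?_⟩, ?_, ?_⟩
    · intro c
      show max (t + ξ₁ _) (ξ₂ _) = c
      rw [hξ₁.1.1, hξ₂.1.1]
      exact max_eq_right (by linarith [ht.2])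
    · intro c Φ
      show max (t + ξ₁ _) (ξ₂ _) = c + max (t + ξ₁ Φ) (ξ₂ Φ)
      rw [hξ₁.1.2.1, hξ₂.1.2.1]
      rw [show t + (c + ξ₁ Φ) = c + (t + ξ₁ Φ) by ring, max_add_add_left]
    · intro Φ Ψ
      show max (t + ξ₁ _) (ξ₂ _) = max (max (t + ξ₁ Φ) (ξ₂ Φ)) (max (t + ξ₁ Ψ) (ξ₂ Ψ))
      rw [hξ₁.1.2.2, hξ₂.1.2.2, ← max_add_add_left t, max_max_max_comm]
    · intro φ
      show max (t + ξ₁ _) (ξ₂ _) = μ₁ φ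
      rw [hξ₁.2.1, hξ₂.2.1]
      exact max_eq_right (by linarith [ht.2])
    · intro φ
      show max (t + ξ₁ _) (ξ₂ _) = μ₂ φ
      rw [hξ₁.2.2, hξ₂.2.2]
      exact max_eq_right (by linarith [ht.2])
  set F : Set.Icc a (0:ℝ) → {ξ : C(X × X, ℝ) → ℝ // IsAdmissible μ₁ μ₂ ξ} :=
    fun t => ⟨fun Φ => max (t.1 + ξ₁ Φ) (ξ₂ Φ), hfam t.1 t.2⟩ with hF
  have hFinj : Function.Injective F := by
    intro t t' htt
    have h1 : (F t).1 Φ₀ = (F t').1 Φ₀ := by rw [htt]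
    have h2 : ∀ s : Set.Icc a (0:ℝ), (F s).1 Φ₀ = s.1 + ξ₁ Φ₀ := by
      intro s
      show max (s.1 + ξ₁ Φ₀) (ξ₂ Φ₀) = s.1 + ξ₁ Φ₀
      exact max_eq_left (by linarith [s.2.1])
    rw [h2 t, h2 t'] at h1
    exact Subtype.ext (by linarith)
  have hlift := Cardinal.lift_mk_le'.mpr ⟨⟨F, hFinj⟩⟩
  rw [Cardinal.mk_Icc_real haneg, Cardinal.lift_continuum, Cardinal.lift_uzero] at hlift
  exact hlift
end conclusion

theorem stmt17 {X : Type*} [TopologicalSpace X] [CompactSpace X] [T2Space X]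
    (μ₁ μ₂ : C(X, ℝ) → ℝ) (h₁ : IsIPM μ₁) (h₂ : IsIPM μ₂)
    (hs₁ : (idemSupp μ₁).Nontrivial) (hs₂ : (idemSupp μ₂).Nontrivial) :
    Cardinal.continuum ≤ Cardinal.mk {ξ : C(X × X, ℝ) → ℝ // IsAdmissible μ₁ μ₂ ξ} := by
  exact continuum_le_of_twoSep (twoSep_main h₁ h₂ hs₁ hs₂)
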